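/- Let X be an n×n real symmetric positive semidefinite matrix, let v be a vector in the image (column space) of X, and let λ be a scalar with 0 ≤ λ ≤ (vᵀX†v)⁻¹, where X† denotes the Moore–Penrose pseudoinverse of X. Then the matrix Y = X − λ v vᵀ is positive semidefinite. -/

import Mathlib

open Matrix

/-- `Xd` is the Moore–Penrose pseudoinverse of `X`. -/
def IsMoorePenroseInv {n : ℕ} (X Xd : Matrix (Fin n) (Fin n) ℝ) : Prop :=
  X * Xd * X = X ∧ Xd * X * Xd = Xd ∧ (X * Xd)ᵀ = X * Xd ∧ (Xd * X)ᵀ = Xd * X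

lemma dot_sq_le {n : ℕ} (a b : Fin n → ℝ) : (a ⬝ᵥ b) ^ 2 ≤ (a ⬝ᵥ a) * (b ⬝ᵥ b) := by
  simpa [dotProduct, pow_two] using Finset.sum_mul_sq_le_sq_mul_sq Finset.univ a b

lemma dot_mv {n : ℕ} (A : Matrix (Fin n) (Fin n) ℝ) (u x : Fin n → ℝ) :
    (A *ᵥ u) ⬝ᵥ x = u ⬝ᵥ Aᵀ *ᵥ x := by
  rw [dotProduct_comm (A *ᵥ u) x, dotProduct_mulVec, ← mulVec_transpose, dotProduct_comm]

theorem stmt0 {n : ℕ} (X Xd : Matrix (Fin n) (Fin n) ℝ) (v : Fin n → ℝ) (l : ℝ)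
    (hX : X.PosSemidef) (hXd : IsMoorePenroseInv X Xd)
    (hv : ∃ w, X.mulVec w = v) (hpos : 0 < v ⬝ᵥ Xd.mulVec v)
    (hl0 : 0 ≤ l) (hl1 : l ≤ (v ⬝ᵥ Xd.mulVec v)⁻¹) :
    (X - l • vecMulVec v v).PosSemidef := by
  obtain ⟨w, hw⟩ := hv
  set α := v ⬝ᵥ Xd.mulVec v with hα
  open scoped MatrixOrder in set S := CFC.sqrt X with hS
  open scoped MatrixOrder in have hSS : S * S = X := CFC.sqrt_mul_sqrt_self X hX.nonneg
  open scoped MatrixOrder in have hSsym : Sᵀ = S := (CFC.sqrt_nonneg X).posSemidef.1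
  have hXsym : Xᵀ = X := by
    have := hX.1
    simpa [Matrix.IsHermitian] using this
  have hαw : α = S.mulVec w ⬝ᵥ S.mulVec w := by
    have h1 : X * Xd * X = X := hXd.1
    have h2 : α = w ⬝ᵥ X.mulVec w := by
      rw [hα, ← hw, dot_mv, hXsym, mulVec_mulVec, mulVec_mulVec, h1]
    rw [h2, dot_mv, hSsym, mulVec_mulVec, hSS]
  refine Matrix.PosSemidef.of_dotProduct_mulVec_nonneg ?_ ?_
  · have hvvT : (vecMulVec v v)ᵀ = vecMulVec v v := by
      ext i j; simp [vecMulVec_apply, transpose_apply, mul_comm]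
    have : (X - l • vecMulVec v v)ᵀ = X - l • vecMulVec v v := by
      rw [transpose_sub, transpose_smul, hvvT, hXsym]
    simpa [Matrix.IsHermitian] using this
  · intro x
    have hx : star x = x := rfl
    have hvv : x ⬝ᵥ (vecMulVec v v) *ᵥ x = (v ⬝ᵥ x) ^ 2 := by
      simp only [dotProduct, mulVec, vecMulVec_apply, pow_two, dotProduct]
      rw [Finset.sum_mul_sum]
      apply Finset.sum_congr rfl; intro i _
      rw [Finset.mul_sum]
      apply Finset.sum_congr rfl; intro j _
      ring
    have key : x ⬝ᵥ (X - l • vecMulVec v v).mulVec x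
        = x ⬝ᵥ X.mulVec x - l * (v ⬝ᵥ x) ^ 2 := by
      rw [sub_mulVec, dotProduct_sub, smul_mulVec, dotProduct_smul, smul_eq_mul, hvv]
    have hxX : x ⬝ᵥ X.mulVec x = S.mulVec x ⬝ᵥ S.mulVec x := by
      rw [dot_mv, hSsym, mulVec_mulVec, hSS]
    have hvx : v ⬝ᵥ x = S.mulVec w ⬝ᵥ S.mulVec x := by
      rw [dot_mv, hSsym, mulVec_mulVec, hSS, ← hw, dot_mv, hXsym]
    have hcs : (v ⬝ᵥ x) ^ 2 ≤ α * (x ⬝ᵥ X.mulVec x) := by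
      rw [hvx, hαw, hxX]; exact dot_sq_le _ _
    have hXx0 : 0 ≤ x ⬝ᵥ X.mulVec x := by
      have := hX.dotProduct_mulVec_nonneg x; simpa [hx] using this
    have hlα : l * α ≤ 1 := by
      calc l * α ≤ α⁻¹ * α := mul_le_mul_of_nonneg_right hl1 (le_of_lt hpos)
        _ = 1 := inv_mul_cancel₀ (ne_of_gt hpos)
    have hmain : l * (v ⬝ᵥ x) ^ 2 ≤ x ⬝ᵥ X.mulVec x := by
      calc l * (v ⬝ᵥ x) ^ 2 ≤ l * (α * (x ⬝ᵥ X.mulVec x)) :=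
            mul_le_mul_of_nonneg_left hcs hl0
        _ = (l * α) * (x ⬝ᵥ X.mulVec x) := by ring
        _ ≤ 1 * (x ⬝ᵥ X.mulVec x) := mul_le_mul_of_nonneg_right hlα hXx0
        _ = _ := one_mul _
    have h := sub_nonneg.mpr hmain
    rw [← key] at h
    simpa [hx] using h
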